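/- An integrally closed one-dimensional commutative integral domain is stable if and only if it is a Dedekind domain. -/

import Mathlib

noncomputable section

open scoped nonZeroDivisors Pointwise

set_option synthInstance.maxHeartbeats 1000000
set_option maxHeartbeats 1000000

/-- For a nonzero ideal `I` of a domain `R`, viewed as a fractional ideal `J` of the quotient
field, the endomorphism ring `(I : I)` is `J / J` and `{z ∈ K | zI ⊆ (I : I)}` is `J / J / J`.
The ideal `I` is *stable* if it is invertible as an ideal of `(I : I)`, i.e.
`I * ((I:I) : I) = (I:I)`. -/
def Ideal.IsStableIdeal {R : Type*} [CommRing R] [IsDomain R] (I : Ideal R) : Prop :=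
  (I : FractionalIdeal R⁰ (FractionRing R)) *
      ((I : FractionalIdeal R⁰ (FractionRing R)) / (I : FractionalIdeal R⁰ (FractionRing R)) /
        (I : FractionalIdeal R⁰ (FractionRing R))) =
    (I : FractionalIdeal R⁰ (FractionRing R)) / (I : FractionalIdeal R⁰ (FractionRing R))

/-- A domain is *stable* if every nonzero ideal is stable. -/
def StableRing (R : Type*) [CommRing R] [IsDomain R] : Prop :=
  ∀ I : Ideal R, I ≠ ⊥ → I.IsStableIdeal

/-- A domain is *finitely stable* if every nonzero finitely generated ideal is stable. -/
def FinitelyStableRing (R : Type*) [CommRing R] [IsDomain R] : Prop :=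
  ∀ I : Ideal R, I ≠ ⊥ → I.FG → I.IsStableIdeal

section Aux

open FractionalIdeal

variable {R : Type*} [CommRing R] [IsDomain R]

local notation "K" => FractionRing R

/-- For a finitely generated nonzero ideal of an integrally closed domain, the endomorphism
ring is trivial. -/
theorem endo_eq_one_of_fg [IsIntegrallyClosed R] {I : Ideal R} (hI : I ≠ ⊥) (hfg : I.FG) :
    (I : FractionalIdeal R⁰ K) / (I : FractionalIdeal R⁰ K) = 1 := by
  have hJ : (I : FractionalIdeal R⁰ K) ≠ 0 := coeIdeal_ne_zero.mpr hI
  apply le_antisymm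
  · rw [SetLike.le_def]
    intro z hz
    rw [mem_div_iff_of_ne_zero hJ] at hz
    rw [mem_one_iff]
    have hint : IsIntegral R z := by
      refine isIntegral_of_smul_mem_submodule
        ((I : FractionalIdeal R⁰ K) : Submodule R K) ?_ ?_ z ?_
      · rw [ne_eq, coeToSubmodule_eq_bot]; exact hJ
      · rw [coe_coeIdeal]
        exact Submodule.FG.map _ hfg
      · intro n hn
        rw [mem_coe] at hn ⊢
        simpa [smul_eq_mul] using hz n hn
    exact IsIntegrallyClosed.isIntegral_iff.mp hint
  · rw [le_div_iff_mul_le hJ, one_mul]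

/-- In a stable integrally closed domain, every finitely generated nonzero ideal is
invertible. -/
theorem fg_mul_one_div (hst : StableRing R) [IsIntegrallyClosed R] {I : Ideal R}
    (hI : I ≠ ⊥) (hfg : I.FG) :
    (I : FractionalIdeal R⁰ K) * (1 / (I : FractionalIdeal R⁰ K)) = 1 := by
  have h := hst I hI
  unfold Ideal.IsStableIdeal at h
  rwa [endo_eq_one_of_fg hI hfg] at h

/-- The "valuation property" at any proper ideal `P` of a stable integrally closed domain:
any two elements are locally comparable at `P`. -/
theorem vp (hst : StableRing R) [IsIntegrallyClosed R] {P : Ideal R} (hP : P ≠ ⊤)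
    (c d : R) (hc : c ≠ 0) :
    ∃ s ∉ P, ∃ e : R, s * d = c * e ∨ s * c = d * e := by
  set I : Ideal R := Ideal.span {c, d} with hIdef
  have hcI : c ∈ I := Ideal.subset_span (by simp)
  have hdI : d ∈ I := Ideal.subset_span (by simp)
  have hI : I ≠ ⊥ := by
    intro h
    apply hc
    rw [h, Ideal.mem_bot] at hcI
    exact hcI
  have hJ : (I : FractionalIdeal R⁰ K) ≠ 0 := coeIdeal_ne_zero.mpr hI
  have hinv := fg_mul_one_div hst hI (Submodule.fg_span (Set.toFinite _))
  have hdecomp : (I : FractionalIdeal R⁰ K) =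
      spanSingleton R⁰ (algebraMap R K c) + spanSingleton R⁰ (algebraMap R K d) := by
    rw [hIdef, show ({c, d} : Set R) = insert c {d} from rfl, Ideal.span_insert,
      coeIdeal_sup, coeIdeal_span_singleton, coeIdeal_span_singleton]
  have h1 : (1 : K) ∈
      spanSingleton R⁰ (algebraMap R K c) * (1 / (I : FractionalIdeal R⁰ K)) +
        spanSingleton R⁰ (algebraMap R K d) * (1 / (I : FractionalIdeal R⁰ K)) := by
    rw [← add_mul, ← hdecomp, hinv]
    exact one_mem_one _
  rw [← mem_coe, coe_add, Submodule.add_eq_sup, Submodule.mem_sup] at h1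
  obtain ⟨y, hy, w, hw, hyw⟩ := h1
  rw [mem_coe] at hy hw
  obtain ⟨u, hu, rfl⟩ := mem_singleton_mul.mp hy
  obtain ⟨v, hv, rfl⟩ := mem_singleton_mul.mp hw
  rw [mem_div_iff_of_ne_zero hJ] at hu hv
  obtain ⟨c₁, hc₁⟩ := (mem_one_iff _).mp (hu _ (mem_coeIdeal_of_mem R⁰ hcI))
  obtain ⟨d₁, hd₁⟩ := (mem_one_iff _).mp (hu _ (mem_coeIdeal_of_mem R⁰ hdI))
  obtain ⟨c₂, hc₂⟩ := (mem_one_iff _).mp (hv _ (mem_coeIdeal_of_mem R⁰ hcI))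
  obtain ⟨d₂, hd₂⟩ := (mem_one_iff _).mp (hv _ (mem_coeIdeal_of_mem R⁰ hdI))
  have hinj : Function.Injective (algebraMap R K) := IsFractionRing.injective R K
  have hsum : c₁ + d₂ = 1 := by
    apply hinj
    rw [_root_.map_add, _root_.map_one, hc₁, hd₂]
    linear_combination hyw
  have hrel₁ : c₁ * d = c * d₁ := by
    apply hinj
    rw [_root_.map_mul, _root_.map_mul, hc₁, hd₁]
    ring
  have hrel₂ : d₂ * c = d * c₂ := by
    apply hinj
    rw [_root_.map_mul, _root_.map_mul, hd₂, hc₂]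
    ring
  by_cases hc₁P : c₁ ∈ P
  · have hd₂P : d₂ ∉ P := by
      intro h
      exact (Ideal.ne_top_iff_one P).mp hP (by simpa [hsum] using P.add_mem hc₁P h)
    exact ⟨d₂, hd₂P, c₂, Or.inr hrel₂⟩
  · exact ⟨c₁, hc₁P, d₁, Or.inl hrel₁⟩

/-- In a stable, integrally closed, one-dimensional domain, the endomorphism ring of every
nonzero ideal is trivial. -/
theorem endo_eq_one (hst : StableRing R) [IsIntegrallyClosed R] (hdim : ringKrullDim R = 1)
    {I : Ideal R} (hI : I ≠ ⊥) :
    (I : FractionalIdeal R⁰ K) / (I : FractionalIdeal R⁰ K) = 1 := by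
  have hJ : (I : FractionalIdeal R⁰ K) ≠ 0 := coeIdeal_ne_zero.mpr hI
  apply le_antisymm
  swap
  · rw [le_div_iff_mul_le hJ, one_mul]
  rw [SetLike.le_def]
  intro z hz
  rw [mem_div_iff_of_ne_zero hJ] at hz
  by_contra hz1
  have hz0 : z ≠ 0 := fun h => hz1 (h ▸ zero_mem _)
  -- the ideal of denominators of `z`
  let D : Ideal R :=
    { carrier := {r : R | ∃ t : R, algebraMap R K r * z = algebraMap R K t}
      add_mem' := by
        rintro a b ⟨ta, hta⟩ ⟨tb, htb⟩
        exact ⟨ta + tb, by rw [_root_.map_add, _root_.map_add, add_mul, hta, htb]⟩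
      zero_mem' := ⟨0, by simp⟩
      smul_mem' := by
        rintro r a ⟨t, ht⟩
        exact ⟨r * t, by rw [smul_eq_mul, _root_.map_mul, _root_.map_mul, mul_assoc, ht]⟩ }
  have hD : D ≠ ⊤ := by
    intro h
    have h1 : (1 : R) ∈ D := h ▸ Submodule.mem_top
    obtain ⟨t, ht⟩ := h1
    rw [_root_.map_one, one_mul] at ht
    exact hz1 ((mem_one_iff _).mpr ⟨t, ht.symm⟩)
  obtain ⟨P, hPmax, hDP⟩ := Ideal.exists_le_maximal D hD
  have hPprime : P.IsPrime := hPmax.isPrime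
  have hone : (1 : R) ∉ P := (Ideal.ne_top_iff_one P).mp hPmax.ne_top
  have hinj : Function.Injective (algebraMap R K) := IsFractionRing.injective R K
  obtain ⟨⟨a, b⟩, hab⟩ := IsLocalization.surj R⁰ z
  have hb0 : (b : R) ≠ 0 := nonZeroDivisors.ne_zero b.2
  have hb0' : algebraMap R K (b : R) ≠ 0 := fun h => hb0 (hinj (by rw [h, _root_.map_zero]))
  have ha0 : a ≠ 0 := by
    rintro rfl
    rw [_root_.map_zero] at hab
    exact hz0 ((mul_eq_zero.mp hab).resolve_right hb0')
  obtain ⟨s, hs, e, hcase⟩ := vp hst hPmax.ne_top a (b : R) ha0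
  have hs0 : s ≠ 0 := fun h => hs (h ▸ P.zero_mem)
  -- rule out the case `s * a = b * e`, which would make `z` have a denominator outside `P`
  rcases hcase with hse | hse
  swap
  · exfalso
    apply hs
    apply hDP
    have hseK : algebraMap R K s * algebraMap R K a
        = algebraMap R K (b : R) * algebraMap R K e := by
      rw [← _root_.map_mul, ← _root_.map_mul, hse]
    exact ⟨e, mul_right_cancel₀ hb0'
      (by linear_combination (algebraMap R K s) * hab + hseK)⟩
  -- now `s * b = a * e`, so `z = s / e` with `s ∉ P`
  have hseK : algebraMap R K s * algebraMap R K (b : R)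
      = algebraMap R K a * algebraMap R K e := by
    rw [← _root_.map_mul, ← _root_.map_mul, hse]
  have hez : algebraMap R K e * z = algebraMap R K s :=
    mul_right_cancel₀ hb0' (by linear_combination (algebraMap R K e) * hab - hseK)
  have he0 : e ≠ 0 := by
    rintro rfl
    rw [_root_.map_zero, zero_mul] at hez
    exact hs0 (hinj (by rw [← hez, _root_.map_zero]))
  have heP : e ∈ P := hDP ⟨s, hez⟩
  -- the prime ideal of elements infinitely divisible by `e` locally at `P`
  let Q : Ideal R :=
    { carrier := {r : R | ∀ n : ℕ, ∃ s', s' ∉ P ∧ ∃ t : R, s' * r = e ^ n * t}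
      zero_mem' := fun n => ⟨1, hone, 0, by ring⟩
      add_mem' := by
        rintro x y hx hy n
        obtain ⟨sx, hsx, tx, htx⟩ := hx n
        obtain ⟨sy, hsy, ty, hty⟩ := hy n
        refine ⟨sx * sy, fun h => ((hPprime.mem_or_mem h).elim hsx hsy),
          sy * tx + sx * ty, ?_⟩
        linear_combination sy * htx + sx * hty
      smul_mem' := by
        rintro r x hx n
        obtain ⟨sx, hsx, tx, htx⟩ := hx n
        exact ⟨sx, hsx, r * tx, by rw [smul_eq_mul]; linear_combination r * htx⟩ }
  have hmemQ : ∀ r : R, r ∈ Q ↔ ∀ n : ℕ, ∃ s', s' ∉ P ∧ ∃ t : R, s' * r = e ^ n * t :=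
    fun r => Iff.rfl
  have hQP : Q ≤ P := by
    intro r hr
    obtain ⟨s', hs', t, ht⟩ := (hmemQ r).mp hr 1
    have hsP : s' * r ∈ P := by
      rw [ht, pow_one]
      exact Ideal.mul_mem_right _ _ heP
    exact (hPprime.mem_or_mem hsP).resolve_left hs'
  have heQ : e ∉ Q := by
    intro h
    obtain ⟨s', hs', t, ht⟩ := (hmemQ e).mp h 2
    apply hs'
    have h2 : e * s' = e * (e * t) := by linear_combination ht
    rw [mul_left_cancel₀ he0 h2]
    exact Ideal.mul_mem_right _ _ heP
  have hIQ : ∀ x ∈ I, x ∈ Q := by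
    intro x hx
    rw [hmemQ]
    intro n
    have hzn : z ^ n * algebraMap R K x ∈ (I : FractionalIdeal R⁰ K) := by
      induction n with
      | zero =>
        rw [pow_zero, one_mul]
        exact mem_coeIdeal_of_mem R⁰ hx
      | succ n ih =>
        rw [pow_succ, mul_comm (z ^ n) z, mul_assoc]
        exact hz _ ih
    obtain ⟨y, hyI, hy⟩ := (mem_coeIdeal _).mp hzn
    refine ⟨s ^ n, fun h => hs (hPprime.mem_of_pow_mem _ h), y, hinj ?_⟩
    rw [_root_.map_mul, _root_.map_mul, map_pow, map_pow, hy]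
    have hp : (algebraMap R K e) ^ n * z ^ n = (algebraMap R K s) ^ n := by
      rw [← mul_pow, hez]
    linear_combination (algebraMap R K x) * hp.symm
  have hQ0 : Q ≠ ⊥ := by
    obtain ⟨x, hxI, hx0⟩ := (Submodule.ne_bot_iff I).mp hI
    intro h
    exact hx0 (by simpa [h, Ideal.mem_bot] using hIQ x hxI)
  have hQprime : Q.IsPrime := by
    refine ⟨fun h => hPmax.ne_top (top_le_iff.mp (h ▸ hQP)), fun {r r'} hrr' => ?_⟩
    rw [or_iff_not_imp_left]
    intro hr
    rw [hmemQ]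
    intro n
    rw [hmemQ] at hr
    push_neg at hr
    obtain ⟨m, hm⟩ := hr
    have hr0 : r ≠ 0 := by
      rintro rfl
      exact (hm 1 hone 0) (by ring)
    obtain ⟨σ, hσ, τ, hτ⟩ := (hmemQ _).mp hrr' (n + m)
    have hσ0 : σ ≠ 0 := fun h => hσ (h ▸ P.zero_mem)
    obtain ⟨s', hs', f, hf⟩ := vp hst hPmax.ne_top (e ^ m) (σ * r) (pow_ne_zero _ he0)
    rcases hf with hf | hf
    · exact ((hm (s' * σ) (fun h => ((hPprime.mem_or_mem h).elim hs' hσ)) f)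
        (by linear_combination hf)).elim
    · refine ⟨s', hs', f * τ, ?_⟩
      have hcancel : (σ * r) * (s' * r') = (σ * r) * (e ^ n * (f * τ)) := by
        linear_combination s' * hτ + (e ^ n * τ) * hf
      exact mul_left_cancel₀ (mul_ne_zero hσ0 hr0) hcancel
  -- the chain ⊥ < Q < P contradicts Krull dimension 1
  have hQltP : Q < P := lt_of_le_of_ne hQP (fun h => heQ (h ▸ heP))
  have hbotQ : (⊥ : Ideal R) < Q := bot_lt_iff_ne_bot.mpr hQ0
  let c : LTSeries (PrimeSpectrum R) :=
    { length := 2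
      toFun := ![⟨⊥, Ideal.bot_prime⟩, ⟨Q, hQprime⟩, ⟨P, hPprime⟩]
      step := by
        intro i
        fin_cases i
        · exact (PrimeSpectrum.asIdeal_lt_asIdeal _ _).mp hbotQ
        · exact (PrimeSpectrum.asIdeal_lt_asIdeal _ _).mp hQltP }
  have h2 : ((2 : ℕ) : WithBot (WithTop ℕ)) ≤ ringKrullDim R := Order.LTSeries.length_le_krullDim c
  rw [hdim] at h2
  norm_num at h2
  exact absurd h2 (by norm_cast)

end Aux

theorem integrally_closed_one_dimensional_stable_iff_dedekind
    (R : Type*) [CommRing R] [IsDomain R] [IsIntegrallyClosed R]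
    (hdim : ringKrullDim R = 1) :
    StableRing R ↔ IsDedekindDomain R := by
  constructor
  · intro hst
    rw [isDedekindDomain_iff_mul_inv_cancel (K := FractionRing R)]
    intro F hF
    rw [FractionalIdeal.bot_eq_zero] at hF
    have hunit : IsUnit F := by
      obtain ⟨a, aI, ha, rfl⟩ := FractionalIdeal.exists_eq_spanSingleton_mul F
      have haI : aI ≠ ⊥ := by
        rintro rfl
        simp only [FractionalIdeal.coeIdeal_bot, mul_zero] at hF
        exact hF rfl
      have ha' : algebraMap R (FractionRing R) a ≠ 0 :=
        fun h => ha (IsFractionRing.injective R (FractionRing R) (by rw [h, map_zero]))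
      apply IsUnit.mul
      · exact IsUnit.of_mul_eq_one
          (FractionalIdeal.spanSingleton R⁰ (algebraMap R (FractionRing R) a))
          (by rw [FractionalIdeal.spanSingleton_mul_spanSingleton, inv_mul_cancel₀ ha',
            FractionalIdeal.spanSingleton_one])
      · have h := hst aI haI
        unfold Ideal.IsStableIdeal at h
        rw [endo_eq_one hst hdim haI] at h
        exact IsUnit.of_mul_eq_one _ h
    exact (FractionalIdeal.mul_inv_cancel_iff_isUnit (FractionRing R)).mpr hunit
  · intro hDed I hI
    haveI := hDed
    have hJ : (I : FractionalIdeal R⁰ (FractionRing R)) ≠ 0 :=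
      FractionalIdeal.coeIdeal_ne_zero.mpr hI
    unfold Ideal.IsStableIdeal
    rw [div_self hJ, one_div, mul_inv_cancel₀ hJ]
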